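/- Let G be the complete graph on a finite vertex set V, let τ ∈ [0, 1] be a real tolerance, and let c be a configuration with exactly a vertices occupied by type-A agents and exactly b vertices occupied by type-B agents, where a ≥ 1 and b ≥ 1. Then every agent in c is satisfied at tolerance τ if and only if max(a, b) ≤ τ · (a + b − 1). (This establishes the correctness of the constant-time Simulate_Clique decision procedure, which returns 0 under this condition and ∞ otherwise.) -/

import Mathlib

/-- An agent is of one of two types, `A` or `B`. -/
inductive Agent : Type
  | A : Agent
  | B : Agent
  deriving DecidableEq

/-- The opposite type of an agent type. -/
def Agent.other : Agent → Agent
  | .A => .B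
  | .B => .A

/-- The number of occupied neighbors of `v` in graph `G` under configuration `c`. -/
def occNbrCount {V : Type*} [Fintype V] (G : SimpleGraph V) [DecidableRel G.Adj]
    (c : V → Option Agent) (v : V) : ℕ :=
  ((G.neighborFinset v).filter (fun u => c u ≠ none)).card

/-- The number of neighbors of `v` occupied by an agent of the type opposite to the
agent at `v` (and `0` if `v` is unoccupied). -/
def otherTypeCount {V : Type*} [Fintype V] (G : SimpleGraph V) [DecidableRel G.Adj]
    (c : V → Option Agent) (v : V) : ℕ :=
  match c v with
  | none => 0
  | some t => ((G.neighborFinset v).filter (fun u => c u = some t.other)).card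

/-- The agent at `v` is satisfied at tolerance `τ` when its other-type count is at most
`τ` times its occupied-neighbor count. -/
def satisfiedAt {V : Type*} [Fintype V] (G : SimpleGraph V) [DecidableRel G.Adj]
    (τ : ℝ) (c : V → Option Agent) (v : V) : Prop :=
  (otherTypeCount G c v : ℝ) ≤ τ * (occNbrCount G c v : ℝ)

/-- On the complete graph with exactly `a ≥ 1` type-`A` agents and exactly `b ≥ 1`
type-`B` agents, every agent is satisfied at tolerance `τ ∈ [0,1]` if and only if
`max a b ≤ τ * (a + b - 1)`: correctness of the constant-time `Simulate_Clique`
decision procedure. -/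
theorem clique_satisfaction_iff {V : Type*} [Fintype V] [DecidableEq V]
    (τ : ℝ) (hτ : τ ∈ Set.Icc (0 : ℝ) 1)
    (c : V → Option Agent) (a b : ℕ)
    (ha : (Finset.univ.filter (fun v => c v = some Agent.A)).card = a)
    (hb : (Finset.univ.filter (fun v => c v = some Agent.B)).card = b)
    (ha1 : 1 ≤ a) (hb1 : 1 ≤ b) :
    (∀ v : V, c v ≠ none → satisfiedAt (⊤ : SimpleGraph V) τ c v) ↔
      (max a b : ℝ) ≤ τ * ((a : ℝ) + (b : ℝ) - 1) := by
  classical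
  have hfilt : ∀ (v : V) (p : V → Prop) [DecidablePred p],
      ((⊤ : SimpleGraph V).neighborFinset v).filter p
        = (Finset.univ.filter p).erase v := by
    intro v p _
    ext u
    simp only [Finset.mem_filter, SimpleGraph.mem_neighborFinset, SimpleGraph.top_adj,
      Finset.mem_erase, Finset.mem_univ, true_and]
    tauto
  have hsplit : (Finset.univ.filter (fun u => c u ≠ none)).card = a + b := by
    have h1 : (Finset.univ.filter (fun u => c u ≠ none))
        = (Finset.univ.filter (fun u => c u = some Agent.A))
          ∪ (Finset.univ.filter (fun u => c u = some Agent.B)) := by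
      ext u
      simp only [Finset.mem_filter, Finset.mem_union, Finset.mem_univ, true_and]
      rcases h : c u with _ | t
      · simp
      · cases t <;> simp
    have hdisj : Disjoint (Finset.univ.filter (fun u => c u = some Agent.A))
        (Finset.univ.filter (fun u => c u = some Agent.B)) := by
      rw [Finset.disjoint_filter]
      intro u _ h1 h2
      rw [h1] at h2
      simp at h2
    rw [h1, Finset.card_union_of_disjoint hdisj, ha, hb]
  have hocc : ∀ v : V, c v ≠ none → occNbrCount (⊤ : SimpleGraph V) c v = a + b - 1 := by
    intro v hv
    rw [occNbrCount, hfilt, Finset.card_erase_of_mem (by simpa using hv), hsplit]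
  have hoA : ∀ v : V, c v = some Agent.A → otherTypeCount (⊤ : SimpleGraph V) c v = b := by
    intro v hv
    simp only [otherTypeCount, hv, Agent.other, hfilt]
    erw [hfilt v (fun u => c u = some Agent.B), Finset.erase_eq_of_notMem (by simp [hv]), hb]
  have hoB : ∀ v : V, c v = some Agent.B → otherTypeCount (⊤ : SimpleGraph V) c v = a := by
    intro v hv
    simp only [otherTypeCount, hv, Agent.other, hfilt]
    erw [hfilt v (fun u => c u = some Agent.A), Finset.erase_eq_of_notMem (by simp [hv]), ha]
  have hcast : ((a + b - 1 : ℕ) : ℝ) = (a : ℝ) + (b : ℝ) - 1 := by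
    have : 1 ≤ a + b := by omega
    push_cast [this]
    ring
  obtain ⟨vA, hvA⟩ : ∃ v, c v = some Agent.A := by
    have : (Finset.univ.filter (fun v => c v = some Agent.A)).Nonempty := by
      rw [← Finset.card_pos, ha]; omega
    obtain ⟨v, hv⟩ := this
    exact ⟨v, (Finset.mem_filter.mp hv).2⟩
  obtain ⟨vB, hvB⟩ : ∃ v, c v = some Agent.B := by
    have : (Finset.univ.filter (fun v => c v = some Agent.B)).Nonempty := by
      rw [← Finset.card_pos, hb]; omega
    obtain ⟨v, hv⟩ := this
    exact ⟨v, (Finset.mem_filter.mp hv).2⟩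
  constructor
  · intro h
    have h1 := h vA (by simp [hvA])
    have h2 := h vB (by simp [hvB])
    rw [satisfiedAt, hoA vA hvA, hocc vA (by simp [hvA]), hcast] at h1
    rw [satisfiedAt, hoB vB hvB, hocc vB (by simp [hvB]), hcast] at h2
    exact max_le h2 h1
  · intro h v hv
    rcases hc : c v with _ | t
    · exact absurd hc hv
    rw [satisfiedAt, hocc v hv, hcast]
    cases t
    · rw [hoA v hc]; exact le_trans (le_max_right _ _) h
    · rw [hoB v hc]; exact le_trans (le_max_left _ _) h
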